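/- Every infinite set of n-term Egyptian fractions contains a strictly decreasing sequence: if S ⊆ ℝ is infinite and every element of S is of the form 1/m₁ + ⋯ + 1/mₙ with positive integers mᵢ, then there exists a sequence (sₖ) in S with sₖ₊₁ < sₖ for all k. -/

import Mathlib

open Pointwise

/-- The set of negated unit fractions `-(1/m)`, `m ≥ 1`. -/
def egA : Set ℝ := {x | ∃ m : ℕ, 1 ≤ m ∧ x = -(1 / m)}

lemma egA_isWF : egA.IsWF := by
  rw [Set.isWF_iff_no_descending_seq]
  intro f hf hmem
  choose g hg1 hg2 using hmem
  have hg2' : ∀ k : ℕ, f k = -(1 / (g k : ℝ)) := fun k => hg2 k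
  have hganti : StrictAnti g := by
    intro a b hab
    have hfab : f b < f a := hf hab
    rw [hg2', hg2', neg_lt_neg_iff] at hfab
    have : (g b : ℝ) < g a := by
      have hb0 : (0:ℝ) < g b := by exact_mod_cast (hg1 b)
      have ha0 : (0:ℝ) < g a := by exact_mod_cast (hg1 a)
      by_contra h
      push_neg at h
      exact absurd (one_div_le_one_div_of_le ha0 h) (not_le.2 hfab)
    exact_mod_cast this
  have : ∀ k, g k + k ≤ g 0 := by
    intro k
    induction k with
    | zero => simp
    | succ k ih =>
      have := hganti (Nat.lt_succ_self k)
      rw [Nat.succ_eq_add_one] at this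
      omega
  have := this (g 0 + 1)
  omega

/-- Iterated sumsets of `egA`. -/
def egB : ℕ → Set ℝ
  | 0 => {0}
  | k + 1 => egA + egB k

lemma egB_isPWO : ∀ k, (egB k).IsPWO := by
  intro k
  induction k with
  | zero => exact (Set.finite_singleton (0:ℝ)).isPWO
  | succ k ih =>
    rw [egB]
    exact (egA_isWF.isPWO).add ih

lemma egB_mem : ∀ (k : ℕ) (m : Fin k → ℕ), (∀ i, 1 ≤ m i) →
    (∑ i, -((1:ℝ) / m i)) ∈ egB k := by
  intro k
  induction k with
  | zero => intro m _; simp [egB]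
  | succ k ih =>
    intro m hm
    rw [Fin.sum_univ_succ, egB]
    exact Set.add_mem_add ⟨m 0, hm 0, rfl⟩ (ih (fun i => m i.succ) (fun i => hm i.succ))

theorem stmt_15 (n : ℕ) (S : Set ℝ) (hSinf : S.Infinite)
    (hS : ∀ s ∈ S, ∃ m : Fin n → ℕ, (∀ i, 1 ≤ m i) ∧ s = ∑ i, (1 : ℝ) / (m i)) :
    ∃ f : ℕ → ℝ, (∀ k, f k ∈ S) ∧ ∀ k, f (k + 1) < f k := by
  -- the negation of S is a well-founded set
  have hsub : (Neg.neg '' S) ⊆ egB n := by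
    rintro x ⟨s, hs, rfl⟩
    obtain ⟨m, hm, rfl⟩ := hS s hs
    have : -∑ i, (1:ℝ)/(m i) = ∑ i, -((1:ℝ)/(m i)) := by
      rw [← Finset.sum_neg_distrib]
    rw [this]
    exact egB_mem n m hm
  have hWF : (Neg.neg '' S).IsWF := ((egB_isPWO n).mono hsub).isWF
  -- every nonempty subset of S has a maximum
  have hmax : ∀ U : Set ℝ, U ⊆ S → U.Nonempty → ∃ x ∈ U, ∀ y ∈ U, y ≤ x := by
    intro U hUS hUne
    have hWFU : (Neg.neg '' U).IsWF := hWF.mono (Set.image_mono hUS)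
    have hne : (Neg.neg '' U).Nonempty := hUne.image _
    obtain ⟨x, hxU, hx⟩ := hWFU.min_mem hne
    refine ⟨x, hxU, fun y hy => ?_⟩
    have := hWFU.not_lt_min hne (Set.mem_image_of_mem _ hy)
    rw [← hx] at this
    -- this : ¬ -y < -x
    have : -x ≤ -y := not_lt.1 this
    linarith
  -- the "step": from a point below which S is infinite, produce a smaller such point
  have key : ∀ x : ℝ, (S ∩ Set.Iio x).Infinite →
      ∃ y : ℝ, y ∈ S ∧ y < x ∧ (S ∩ Set.Iio y).Infinite := by
    intro x hx
    obtain ⟨y, hyU, hymax⟩ := hmax (S ∩ Set.Iio x) Set.inter_subset_left hx.nonempty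
    refine ⟨y, hyU.1, hyU.2, ?_⟩
    refine Set.Infinite.mono ?_ (hx.diff (Set.finite_singleton y))
    rintro z ⟨hzU, hzy⟩
    have hzle : z ≤ y := hymax z hzU
    have : z ≠ y := by simpa using hzy
    exact ⟨hzU.1, lt_of_le_of_ne hzle this⟩
  -- initial point
  obtain ⟨x₀, hx₀S, hx₀max⟩ := hmax S le_rfl hSinf.nonempty
  have hx₀inf : (S ∩ Set.Iio x₀).Infinite := by
    refine Set.Infinite.mono ?_ (hSinf.diff (Set.finite_singleton x₀))
    rintro z ⟨hzS, hz⟩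
    have : z ≠ x₀ := by simpa using hz
    exact ⟨hzS, lt_of_le_of_ne (hx₀max z hzS) this⟩
  -- build the sequence
  let P : ℝ → Prop := fun x => x ∈ S ∧ (S ∩ Set.Iio x).Infinite
  have key' : ∀ x : {x : ℝ // P x}, ∃ y : {x : ℝ // P x}, (y : ℝ) < x := by
    rintro ⟨x, hxS, hxinf⟩
    obtain ⟨y, hyS, hyx, hyinf⟩ := key x hxinf
    exact ⟨⟨y, hyS, hyinf⟩, hyx⟩
  choose step hstep using key'
  let g : ℕ → {x : ℝ // P x} := fun k => Nat.rec ⟨x₀, hx₀S, hx₀inf⟩ (fun _ x => step x) k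
  exact ⟨fun k => (g k).1, fun k => (g k).2.1, fun k => hstep (g k)⟩
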